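/- Let k ≥ 2 and let W₀, …, W_{k−1} be closed half-spaces in ℝ³, with boundary planes Π₀, …, Π_{k−1}, such that 0 lies in the interior of W₀ ∩ ⋯ ∩ W_{k−1} and, for every i (indices mod k), Πᵢ ≠ Π_{i+1} and Πᵢ ∩ Π_{i+1} ≠ ∅. Then it is impossible that for every i (indices mod k) the orthogonal projection of 0 onto Π_{i+1} lies outside the interior of Wᵢ. (This is the paper's remark that the edges around a vertex of a convex polyhedron cannot all be crossed edges oriented cyclically in one direction.) -/

import Mathlib

open scoped RealInnerProductSpace

/-- given `k ≥ 2` closed half-spaces `W 0, …, W (k-1)` in `ℝ³` with boundary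
planes `B i`, with `0` in the interior of their intersection and consecutive boundary
planes (indices mod `k`) distinct and meeting, it is impossible that for every `i` the
orthogonal projection `p i` of `0` onto `B ((i+1) % k)` lies outside the interior of
`W i`. -/
theorem not_all_edges_cyclically_crossed
    (k : ℕ) (hk : 2 ≤ k)
    (n : ℕ → EuclideanSpace ℝ (Fin 3)) (c : ℕ → ℝ)
    (hn : ∀ i < k, n i ≠ 0)
    (W B : ℕ → Set (EuclideanSpace ℝ (Fin 3)))
    (hW : ∀ i < k, W i = {x | ⟪n i, x⟫ ≤ c i})
    (hB : ∀ i < k, B i = {x | ⟪n i, x⟫ = c i})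
    (h0 : (0 : EuclideanSpace ℝ (Fin 3)) ∈ interior (⋂ i ∈ Finset.range k, W i))
    (hne : ∀ i < k, B i ≠ B ((i + 1) % k))
    (hmeet : ∀ i < k, (B i ∩ B ((i + 1) % k)).Nonempty)
    -- `p i` is the orthogonal projection of `0` onto `B ((i+1) % k)`
    (p : ℕ → EuclideanSpace ℝ (Fin 3))
    (hp : ∀ i < k, p i ∈ B ((i + 1) % k))
    (hperp : ∀ i < k, ∀ x ∈ B ((i + 1) % k),
      ⟪(0 : EuclideanSpace ℝ (Fin 3)) - p i, x - p i⟫ = 0) :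
    ¬ (∀ i < k, p i ∉ interior (W i)) := by
  intro hall
  have hnorm : ∀ i < k, (0:ℝ) < ‖n i‖ := fun i hi => norm_pos_iff.2 (hn i hi)
  -- Step 1 : all c i are positive
  have hci : ∀ i < k, 0 < c i := by
    intro i hi
    have hsub : (⋂ j ∈ Finset.range k, W j) ⊆ W i := by
      intro x hx
      simp only [Set.mem_iInter] at hx
      exact hx i (Finset.mem_range.2 hi)
    have h0i : (0 : EuclideanSpace ℝ (Fin 3)) ∈ interior (W i) := interior_mono hsub h0
    rw [mem_interior_iff_mem_nhds, Metric.mem_nhds_iff] at h0i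
    obtain ⟨ε, hε, hball⟩ := h0i
    set x : EuclideanSpace ℝ (Fin 3) := (ε / (2 * ‖n i‖)) • n i with hx
    have hni := hnorm i hi
    have hxmem : x ∈ Metric.ball (0 : EuclideanSpace ℝ (Fin 3)) ε := by
      rw [Metric.mem_ball, dist_zero_right, hx, norm_smul]
      rw [Real.norm_eq_abs, abs_of_pos (by positivity)]
      have heq : ε / (2 * ‖n i‖) * ‖n i‖ = ε / 2 := by field_simp
      rw [heq]; linarith
    have hxW := hball hxmem
    rw [hW i hi] at hxW
    have hxinner : ⟪n i, x⟫ = ε / (2 * ‖n i‖) * ‖n i‖^2 := by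
      rw [hx, real_inner_smul_right, real_inner_self_eq_norm_sq]
    have hpos : (0:ℝ) < ε / (2 * ‖n i‖) * ‖n i‖^2 := by positivity
    have hle : ⟪n i, x⟫ ≤ c i := hxW
    rw [hxinner] at hle
    linarith
  -- key inequality : the distances from the origin to the planes strictly increase
  have hkey : ∀ i < k, c i / ‖n i‖ < c ((i+1) % k) / ‖n ((i+1) % k)‖ := by
    intro i hi
    set j := (i + 1) % k with hjdef
    have hj : j < k := Nat.mod_lt _ (by omega)
    have hni := hnorm i hi
    have hnj := hnorm j hj
    have hcj := hci j hj
    -- the projection formula : p i = (c j / ‖n j‖²) • n j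
    set q : EuclideanSpace ℝ (Fin 3) := (c j / ‖n j‖^2) • n j with hqdef
    have hqinner : ⟪n j, q⟫ = c j := by
      rw [hqdef, real_inner_smul_right, real_inner_self_eq_norm_sq]
      field_simp
    have hqB : q ∈ B j := by rw [hB j hj]; exact hqinner
    have hpB : ⟪n j, p i⟫ = c j := by
      have := hp i hi; rw [hB j hj] at this; exact this
    have h1 : ⟪p i, q - p i⟫ = 0 := by
      have := hperp i hi q hqB
      rw [zero_sub, inner_neg_left] at this
      linarith
    have h2 : ⟪q, q - p i⟫ = 0 := by
      rw [hqdef, real_inner_smul_left, inner_sub_right]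
      rw [hqinner, hpB]
      ring
    have hpq : p i = q := by
      have h3 : ⟪q - p i, q - p i⟫ = 0 := by
        rw [inner_sub_left, h1, h2]; ring
      have h4 := inner_self_eq_zero.1 h3
      rw [sub_eq_zero] at h4
      exact h4.symm
    -- p i is not in the interior of W i, hence ⟪n i, p i⟫ ≥ c i
    have hge : c i ≤ ⟪n i, p i⟫ := by
      by_contra hlt
      push_neg at hlt
      apply hall i hi
      have hopen : IsOpen {x : EuclideanSpace ℝ (Fin 3) | ⟪n i, x⟫ < c i} :=
        isOpen_lt (Continuous.inner continuous_const continuous_id) continuous_const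
      have hsub : {x : EuclideanSpace ℝ (Fin 3) | ⟪n i, x⟫ < c i} ⊆ W i := by
        rw [hW i hi]; intro x hx
        simp only [Set.mem_setOf_eq] at hx ⊢
        exact le_of_lt hx
      exact interior_maximal hsub hopen hlt
    -- strict Cauchy-Schwarz since the planes are distinct but meet
    have hcs : ⟪n i, n j⟫ < ‖n i‖ * ‖n j‖ := by
      rw [inner_lt_norm_mul_iff_real]
      intro hpar
      apply hne i hi
      rw [← hjdef]
      obtain ⟨y, hyi, hyj⟩ := hmeet i hi
      rw [hB i hi] at hyi
      rw [← hjdef, hB j hj] at hyj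
      simp only [Set.mem_setOf_eq] at hyi hyj
      have hex : ∃ t : ℝ, 0 < t ∧ n j = t • n i := by
        refine ⟨‖n j‖ / ‖n i‖, by positivity, ?_⟩
        rw [div_eq_inv_mul, ← smul_smul, hpar, smul_smul,
          inv_mul_cancel₀ (ne_of_gt hni), one_smul]
      obtain ⟨t, ht, hteq⟩ := hex
      have hcij : t * c i = c j := by
        rw [← hyj, hteq, real_inner_smul_left, hyi]
      rw [hB i hi, hB j hj]
      ext x
      simp only [Set.mem_setOf_eq]
      rw [hteq, real_inner_smul_left, ← hcij]
      exact ⟨fun h => by rw [h], fun h => mul_left_cancel₀ (ne_of_gt ht) h⟩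
    have hinner : ⟪n i, p i⟫ = (c j / ‖n j‖^2) * ⟪n i, n j⟫ := by
      rw [hpq, hqdef, real_inner_smul_right]
    have hApos : (0:ℝ) < c j / ‖n j‖^2 := by positivity
    have h5 : (c j / ‖n j‖^2) * ⟪n i, n j⟫ < (c j / ‖n j‖^2) * (‖n i‖ * ‖n j‖) :=
      mul_lt_mul_of_pos_left hcs hApos
    have h6 : (c j / ‖n j‖^2) * (‖n i‖ * ‖n j‖) = c j / ‖n j‖ * ‖n i‖ := by
      field_simp
    have h8 : c i < c j / ‖n j‖ * ‖n i‖ := by rw [hinner] at hge; linarith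
    have h9 := mul_lt_mul_of_pos_right h8 hnj
    have h7 : c j / ‖n j‖ * ‖n i‖ * ‖n j‖ = c j * ‖n i‖ := by field_simp
    rw [div_lt_div_iff₀ hni hnj]
    linarith [h9, h7]
  -- derive the contradiction from the cyclic strict chain
  have hmono : ∀ m, m < k → c 0 / ‖n 0‖ ≤ c m / ‖n m‖ := by
    intro m
    induction m with
    | zero => intro _; exact le_refl _
    | succ m ih =>
      intro hm
      have hm' : m < k := by omega
      have h := hkey m hm'
      rw [Nat.mod_eq_of_lt hm] at h
      exact le_of_lt (lt_of_le_of_lt (ih hm') h)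
  have hlast := hkey (k-1) (by omega)
  have hmod : (k - 1 + 1) % k = 0 := by
    have h : k - 1 + 1 = k := by omega
    rw [h, Nat.mod_self]
  rw [hmod] at hlast
  linarith [hmono (k-1) (by omega)]
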